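/- arXiv:1301.6392 — 2 statements merged into one kernel-verified Lean document; each statement's English description precedes it below -/
import Mathlib

section
/- Let (v_n) be a positive sequence with lim n(1 - v_{n-1}/v_n) = v*, let (γ_n) be a positive sequence with lim n(1 - γ_{n-1}/γ_n) = -α and γ_n → 0, set ξ = lim 1/(nγ_n) (possibly 0), and let m > 0 satisfy m - v*ξ > 0. Then, with Π_n = ∏_{j=1}^n (1-γ_j), one has lim_{n→∞} v_n Π_n^m ∑_{k=1}^n Π_k^{-m} γ_k / v_k = 1/(m - v*ξ). -/
set_option maxHeartbeats 1000000

open Filter Finset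

private theorem tele0 (f : ℕ → ℝ) (N : ℕ) : ∀ n, N ≤ n →
    ∑ j ∈ Icc (N+1) n, (f j - f (j-1)) = f n - f N := by
  intro n hn
  induction n, hn using Nat.le_induction with
  | base => simp
  | succ n hn ih =>
    rw [Finset.sum_Icc_succ_top (by omega), ih]
    have h1 : n + 1 - 1 = n := rfl
    rw [h1]; ring

theorem stmt0 (v γ : ℕ → ℝ) (vstar α ξ m : ℝ)
    (hv : ∀ n, 0 < v n)
    (hγ : ∀ n, γ n ∈ Set.Ioo (0:ℝ) 1)
    (hvGS : Tendsto (fun n : ℕ => (n : ℝ) * (1 - v (n-1) / v n)) atTop (nhds vstar))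
    (hγGS : Tendsto (fun n : ℕ => (n : ℝ) * (1 - γ (n-1) / γ n)) atTop (nhds (-α)))
    (hγ0 : Tendsto γ atTop (nhds 0))
    (hξ : Tendsto (fun n : ℕ => 1 / ((n : ℝ) * γ n)) atTop (nhds ξ))
    (hm : 0 < m) (hmξ : 0 < m - vstar * ξ) :
    Tendsto (fun n : ℕ =>
      v n * (∏ j ∈ Icc 1 n, (1 - γ j)) ^ m *
        ∑ k ∈ Icc 1 n, ((∏ j ∈ Icc 1 k, (1 - γ j)) ^ (-m)) * γ k / v k)
      atTop (nhds (1 / (m - vstar * ξ))) := by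
  set c : ℝ := m - vstar * ξ with hc
  set P : ℕ → ℝ := fun n => ∏ j ∈ Icc 1 n, (1 - γ j) with hPdef
  have hγ1 : ∀ j, 0 < 1 - γ j := fun j => by have := (hγ j).2; linarith
  have hP : ∀ n, 0 < P n := fun n => Finset.prod_pos (fun j _ => hγ1 j)
  have hPrec : ∀ n : ℕ, 1 ≤ n → P n = P (n-1) * (1 - γ n) := by
    intro n hn
    obtain ⟨k, rfl⟩ : ∃ k, n = k + 1 := ⟨n - 1, (Nat.succ_pred_eq_of_pos hn).symm⟩
    simpa using Finset.prod_Icc_succ_top (by omega) (fun j => (1 - γ j))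
  set b : ℕ → ℝ := fun n => P n ^ (-m) / v n with hbdef
  set d : ℕ → ℝ := fun k => P k ^ (-m) * γ k / v k with hddef
  set S : ℕ → ℝ := fun n => ∑ k ∈ Icc 1 n, d k with hSdef
  have hbpos : ∀ n, 0 < b n := fun n => div_pos (Real.rpow_pos_of_pos (hP n) _) (hv n)
  have hdpos : ∀ k, 0 < d k :=
    fun k => div_pos (mul_pos (Real.rpow_pos_of_pos (hP k) _) (hγ k).1) (hv k)
  have hSrec : ∀ k : ℕ, 1 ≤ k → S k = S (k-1) + d k := by
    intro k hk
    obtain ⟨j, rfl⟩ : ∃ j, k = j + 1 := ⟨k - 1, (Nat.succ_pred_eq_of_pos hk).symm⟩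
    simpa using Finset.sum_Icc_succ_top (by omega) d
  have hSpos : ∀ n, 1 ≤ n → 0 < S n := by
    intro n hn
    obtain ⟨j, rfl⟩ : ∃ j, n = j + 1 := ⟨n - 1, (Nat.succ_pred_eq_of_pos hn).symm⟩
    rw [hSrec (j+1) (by omega)]
    have : 0 ≤ S ((j+1)-1) := Finset.sum_nonneg fun k _ => (hdpos k).le
    have := hdpos (j+1); linarith
  -- the discrete "derivative" ratio
  set t : ℕ → ℝ := fun n => (1 - (1 - γ n) ^ m * (v n / v (n-1))) / γ n with htdef
  have h_delta : ∀ k : ℕ, 1 ≤ k → b k - b (k-1) = t k * d k := by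
    intro k hk
    have hPk : P (k-1) ^ (-m) = P k ^ (-m) * (1 - γ k) ^ m := by
      have h1 : P (k-1) = P k / (1 - γ k) := by
        rw [hPrec k hk, mul_div_cancel_right₀ _ (hγ1 k).ne']
      rw [h1, Real.div_rpow (hP k).le (hγ1 k).le, Real.rpow_neg (hγ1 k).le, div_eq_mul_inv, inv_inv]
    have hvk := (hv k).ne'
    have hvk1 := (hv (k-1)).ne'
    have hγk := (hγ k).1.ne'
    simp only [hbdef, htdef, hddef, hPk]
    field_simp
  -- limit of t
  have h_t : Tendsto t atTop (nhds c) := by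
    rw [hc]
    have hγ1 : ∀ j, 0 < 1 - γ j := fun j => by have := (hγ j).2; linarith
    -- w n = v n / v (n-1) → 1
    have hq : Tendsto (fun n : ℕ => v (n-1) / v n) atTop (nhds 1) := by
      have h1 : Tendsto (fun n : ℕ => (1:ℝ)/n * ((n:ℝ) * (1 - v (n-1) / v n))) atTop
          (nhds (0 * vstar)) := tendsto_one_div_atTop_nhds_zero_nat.mul hvGS
      rw [zero_mul] at h1
      have h2 : Tendsto (fun n : ℕ => 1 - (1 - v (n-1) / v n)) atTop (nhds (1 - 0)) := by
        apply Tendsto.const_sub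
        apply h1.congr'
        filter_upwards [eventually_ge_atTop 1] with n hn
        have : (n:ℝ) ≠ 0 := Nat.cast_ne_zero.mpr (by omega)
        field_simp
      simpa using h2
    have hw : Tendsto (fun n : ℕ => v n / v (n-1)) atTop (nhds 1) := by
      have := hq.inv₀ one_ne_zero
      simp only [inv_div, inv_one] at this
      exact this
    -- A n → m
    have hA : Tendsto (fun n : ℕ => (1 - (1 - γ n) ^ m) / γ n) atTop (nhds m) := by
      have hg : HasDerivAt (fun x : ℝ => (1 - x) ^ m) (-m) 0 := by
        have h1 : HasDerivAt (fun y : ℝ => y ^ m) (m * (1:ℝ) ^ (m-1)) 1 :=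
          Real.hasDerivAt_rpow_const (Or.inl one_ne_zero)
        have h2 : HasDerivAt (fun x : ℝ => 1 - x) (-1 : ℝ) 0 := by
          simpa using (hasDerivAt_id (0:ℝ)).const_sub 1
        have h3 := HasDerivAt.comp (0:ℝ) (by simpa using h1) h2
        simpa [Real.one_rpow, Function.comp_def] using h3
      have hslope := hasDerivAt_iff_tendsto_slope.mp hg
      have hγne : Tendsto γ atTop (nhdsWithin 0 {(0:ℝ)}ᶜ) :=
        tendsto_nhdsWithin_of_tendsto_nhds_of_eventually_within _ hγ0
          (Eventually.of_forall fun n => (hγ n).1.ne')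
      have hcomp := (hslope.comp hγne).neg
      rw [neg_neg] at hcomp
      apply hcomp.congr
      intro n
      simp only [Function.comp_apply, slope_def_field]
      rw [show (1:ℝ) - (0:ℝ) = 1 from by norm_num, Real.one_rpow, sub_zero]
      rw [← neg_div, neg_sub]
    -- B n → -(vstar ξ)
    have hB : Tendsto (fun n : ℕ => (1 - γ n) ^ m * ((1 - v n / v (n-1)) / γ n)) atTop
        (nhds (1 * (-1 * vstar * ξ))) := by
      have h1 : Tendsto (fun n : ℕ => (1 - γ n) ^ m) atTop (nhds 1) := by
        have hcont : ContinuousAt (fun x : ℝ => x ^ m) 1 :=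
          Real.continuousAt_rpow_const 1 m (Or.inl one_ne_zero)
        have h2 : Tendsto (fun n : ℕ => 1 - γ n) atTop (nhds 1) := by
          simpa using tendsto_const_nhds.sub hγ0
        have := hcont.tendsto.comp h2
        simpa [Real.one_rpow, Function.comp_def] using this
      have h2 : Tendsto (fun n : ℕ =>
          -(v n / v (n-1)) * ((n:ℝ) * (1 - v (n-1) / v n)) * (1 / ((n:ℝ) * γ n))) atTop
          (nhds (-1 * vstar * ξ)) := (hw.neg.mul hvGS).mul hξ
      refine h1.mul (h2.congr' ?_)
      filter_upwards [eventually_ge_atTop 1] with n hn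
      have hn0 : (n:ℝ) ≠ 0 := Nat.cast_ne_zero.mpr (by omega)
      have h3 := (hv n).ne'
      have h4 := (hv (n-1)).ne'
      have h5 := (hγ n).1.ne'
      field_simp
      ring
    have := hA.add hB
    rw [show m + 1 * (-1 * vstar * ξ) = m - vstar * ξ from by ring] at this
    apply this.congr
    intro n
    have h5 := (hγ n).1.ne'
    have h6 := (hv (n-1)).ne'
    have h7 := (hv n).ne'
    rw [htdef]
    field_simp
    ring
  -- b tends to infinity
  have hb_top : Tendsto b atTop atTop := by
    -- constants
    have hξ0 : 0 ≤ ξ := by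
      refine ge_of_tendsto' hξ fun n => ?_
      have := (hγ n).1
      positivity
    obtain ⟨V, hVdef⟩ : ∃ V : ℝ, V = max vstar 0 := ⟨_, rfl⟩
    have hV0 : 0 ≤ V := hVdef ▸ le_max_right _ _
    have hVv : vstar ≤ V := hVdef ▸ le_max_left _ _
    have hVξ : V * ξ < m := by
      rcases le_or_gt vstar 0 with h | h
      · have : V = 0 := hVdef.trans (max_eq_right h)
        rw [this]; simpa using hm
      · have : V = vstar := hVdef.trans (max_eq_left h.le)
        rw [this]; linarith
    obtain ⟨δ, hδdef⟩ : ∃ δ : ℝ, δ = min 1 ((m - V * ξ) / (V + ξ + 2)) := ⟨_, rfl⟩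
    have hδ : 0 < δ := by
      rw [hδdef]
      apply lt_min one_pos
      apply div_pos (by linarith) (by linarith)
    have hkey : (V + δ) * (ξ + δ) < m := by
      have h1 : δ ≤ 1 := hδdef ▸ min_le_left _ _
      have h2 : δ ≤ (m - V * ξ) / (V + ξ + 2) := hδdef ▸ min_le_right _ _
      have h3 : δ * (V + ξ + 2) ≤ m - V * ξ := by
        rw [← le_div_iff₀ (by linarith)]; exact h2
      nlinarith [mul_le_mul_of_nonneg_left h1 hδ.le, hδ.le, hV0, hξ0]
    obtain ⟨μ, hμdef⟩ : ∃ μ : ℝ, μ = V + δ/2 := ⟨_, rfl⟩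
    have hμpos : 0 < μ := by rw [hμdef]; linarith
    have hξδ : 0 < ξ + δ := by linarith
    obtain ⟨A, hAdef⟩ : ∃ A : ℝ, A = m / (ξ + δ) - (V + δ) := ⟨_, rfl⟩
    have hA : 0 < A := by
      have : V + δ < m / (ξ + δ) := by
        rw [lt_div_iff₀ hξδ]; exact hkey
      simpa [hAdef] using sub_pos.mpr this
    -- eventual bounds
    have hev1 : ∀ᶠ j : ℕ in atTop, (j:ℝ) * (1 - v (j-1) / v j) ≤ μ :=
      hvGS.eventually_le_const (by rw [hμdef]; linarith)
    have hev2 : ∀ᶠ j : ℕ in atTop, 1 / ((j:ℝ) * γ j) ≤ ξ + δ :=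
      hξ.eventually_le_const (by linarith)
    have hev3 : ∀ᶠ j : ℕ in atTop, 2 * μ ≤ (j:ℝ) := by
      have := tendsto_natCast_atTop_atTop (R := ℝ).eventually_ge_atTop (2*μ)
      exact this
    obtain ⟨N, hN⟩ := (hev1.and (hev2.and hev3)).and (eventually_ge_atTop 1) |>.exists_forall_of_atTop
    have hN1 : 1 ≤ N := (hN N le_rfl).2
    -- pointwise bound for log v increments
    have hlogv_inc : ∀ j, N + 1 ≤ j →
        Real.log (v j) - Real.log (v (j-1)) ≤ μ / j + 2*μ^2 / (j:ℝ)^2 := by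
      intro j hj
      obtain ⟨⟨hs, _, hj2μ⟩, hj1⟩ := hN j (by omega)
      have hjpos : (0:ℝ) < j := by exact_mod_cast Nat.lt_of_lt_of_le Nat.zero_lt_one hj1
      have hx : μ / j ≤ 1/2 := by
        rw [div_le_iff₀ hjpos]; linarith
      have hx0 : 0 ≤ μ / j := by positivity
      have hvr : 1 - μ / j ≤ v (j-1) / v j := by
        have h' : 1 - v (j-1) / v j ≤ μ / j := by
          rw [le_div_iff₀ hjpos, mul_comm]; exact hs
        linarith
      have h1μ : (0:ℝ) < 1 - μ / j := by linarith
      have hlog1 : Real.log (v j) - Real.log (v (j-1)) = -Real.log (v (j-1) / v j) := by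
        rw [Real.log_div (hv (j-1)).ne' (hv j).ne']; ring
      rw [hlog1]
      have hmono : Real.log (1 - μ/j) ≤ Real.log (v (j-1) / v j) :=
        Real.log_le_log h1μ hvr
      have hbound : -Real.log (1 - μ/j) ≤ (μ/j) / (1 - μ/j) := by
        have h2 := Real.log_le_sub_one_of_pos (inv_pos.mpr h1μ)
        rw [Real.log_inv] at h2
        have h3 : (1 - μ/(j:ℝ))⁻¹ - 1 = (μ/j) / (1 - μ/j) := by
          rw [eq_div_iff h1μ.ne', sub_mul, inv_mul_cancel₀ h1μ.ne']; ring
        linarith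
      have hfinal : (μ/j) / (1 - μ/j) ≤ μ/j + 2*(μ/j)^2 := by
        rw [div_le_iff₀ h1μ]
        nlinarith
      have : 2*(μ/j)^2 = 2*μ^2/(j:ℝ)^2 := by ring
      linarith
    -- pointwise bound for log P increments
    have hlogP_inc : ∀ j, N + 1 ≤ j →
        (1/(ξ+δ)) * (Real.log ((j:ℝ)+1) - Real.log (j:ℝ)) ≤
          (- Real.log (P j)) - (- Real.log (P (j-1))) := by
      intro j hj
      obtain ⟨⟨_, hγj, _⟩, hj1⟩ := hN j (by omega)
      have hjpos : (0:ℝ) < j := by exact_mod_cast Nat.lt_of_lt_of_le Nat.zero_lt_one hj1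
      have hγpos := (hγ j).1
      have hjγ : 0 < (j:ℝ) * γ j := by positivity
      -- γ j ≥ 1/((ξ+δ) j)
      have hγlb : 1 / ((ξ+δ) * j) ≤ γ j := by
        rw [div_le_iff₀ hjγ] at hγj
        rw [div_le_iff₀ (show (0:ℝ) < (ξ+δ)*j by positivity)]
        calc (1:ℝ) ≤ (ξ+δ) * ((j:ℝ) * γ j) := hγj
          _ = γ j * ((ξ+δ)*j) := by ring
      -- -log(1-γ j) ≥ γ j
      have hlogγ : γ j ≤ -Real.log (1 - γ j) := by
        have := Real.log_le_sub_one_of_pos (hγ1 j)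
        linarith
      -- log(j+1) - log j ≤ 1/j
      have hlogj : Real.log ((j:ℝ)+1) - Real.log (j:ℝ) ≤ 1/j := by
        have h1 : Real.log (((j:ℝ)+1)/j) ≤ ((j:ℝ)+1)/j - 1 :=
          Real.log_le_sub_one_of_pos (by positivity)
        rw [Real.log_div (by positivity) hjpos.ne'] at h1
        have : ((j:ℝ)+1)/j - 1 = 1/j := by field_simp; ring
        linarith
      -- increment of -log P
      have hPinc : (- Real.log (P j)) - (- Real.log (P (j-1))) = -Real.log (1 - γ j) := by
        rw [hPrec j (by omega), Real.log_mul (hP (j-1)).ne' (hγ1 j).ne']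
        ring
      rw [hPinc]
      calc (1/(ξ+δ)) * (Real.log ((j:ℝ)+1) - Real.log (j:ℝ))
          ≤ (1/(ξ+δ)) * (1/j) := by
            apply mul_le_mul_of_nonneg_left hlogj (by positivity)
        _ = 1/((ξ+δ)*j) := by rw [one_div_mul_one_div]
        _ ≤ γ j := hγlb
        _ ≤ -Real.log (1 - γ j) := hlogγ
    -- summed bounds
    have hlogv : ∀ n, N ≤ n → 1 ≤ n →
        Real.log (v n) ≤ Real.log (v N) + μ * Real.log n + 2*μ^2 * (1/(N:ℝ)) := by
      intro n hn hn1
      have htel := tele0 (fun j => Real.log (v j)) N n hn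
      have hsum1 : ∑ j ∈ Icc (N+1) n, (Real.log (v j) - Real.log (v (j-1)))
          ≤ ∑ j ∈ Icc (N+1) n, (μ / j + 2*μ^2 / (j:ℝ)^2) := by
        apply Finset.sum_le_sum
        intro j hj
        exact hlogv_inc j (by simp at hj; omega)
      rw [htel] at hsum1
      have hsplit : ∑ j ∈ Icc (N+1) n, (μ / j + 2*μ^2 / (j:ℝ)^2)
          = μ * (∑ j ∈ Icc (N+1) n, 1/(j:ℝ)) + 2*μ^2 * (∑ j ∈ Icc (N+1) n, 1/(j:ℝ)^2) := by
        rw [Finset.sum_add_distrib, Finset.mul_sum, Finset.mul_sum]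
        congr 1 <;> apply Finset.sum_congr rfl <;> intro j _ <;> ring
      -- ∑ 1/j ≤ log n
      have hharm : ∑ j ∈ Icc (N+1) n, 1/(j:ℝ) ≤ Real.log n := by
        have h1 : ∑ j ∈ Icc (N+1) n, 1/(j:ℝ)
            ≤ ∑ j ∈ Icc (N+1) n, (Real.log (j:ℝ) - Real.log ((j:ℝ)-1)) := by
          apply Finset.sum_le_sum
          intro j hj
          have hj2 : 2 ≤ j := by simp at hj; omega
          have hjpos : (0:ℝ) < (j:ℝ) - 1 := by
            have : (2:ℝ) ≤ j := by exact_mod_cast hj2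
            linarith
          have hjpos' : (0:ℝ) < (j:ℝ) := by linarith
          have := Real.log_le_sub_one_of_pos (show (0:ℝ) < ((j:ℝ)-1)/j by positivity)
          rw [Real.log_div (by linarith) hjpos'.ne'] at this
          have h2 : ((j:ℝ)-1)/j - 1 = -(1/j) := by field_simp; ring
          linarith
        have h2 : ∑ j ∈ Icc (N+1) n, (Real.log (j:ℝ) - Real.log ((j:ℝ)-1))
            = Real.log n - Real.log N := by
          have := tele0 (fun j => Real.log (j:ℝ)) N n hn
          rw [← this]
          apply Finset.sum_congr rfl
          intro j hj
          have hj1 : 1 ≤ j := by simp at hj; omega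
          congr 1
          · congr 1
            push_cast [Nat.cast_sub hj1]
            ring
        have h3 : 0 ≤ Real.log N := Real.log_natCast_nonneg N
        linarith
      -- ∑ 1/j² ≤ 1/N
      have hsq : ∑ j ∈ Icc (N+1) n, 1/(j:ℝ)^2 ≤ 1/(N:ℝ) := by
        have h1 : ∑ j ∈ Icc (N+1) n, 1/(j:ℝ)^2
            ≤ ∑ j ∈ Icc (N+1) n, ((-1/(j:ℝ)) - (-1/((j:ℝ)-1))) := by
          apply Finset.sum_le_sum
          intro j hj
          have hj2 : 2 ≤ j := by simp at hj; omega
          have hc2 : (2:ℝ) ≤ j := by exact_mod_cast hj2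
          have h4 : (0:ℝ) < (j:ℝ) - 1 := by linarith
          have h5 : (0:ℝ) < (j:ℝ) := by linarith
          rw [div_sub_div _ _ h5.ne' h4.ne']
          rw [div_le_div_iff₀ (by positivity) (by positivity)]
          nlinarith
        have h2 : ∑ j ∈ Icc (N+1) n, ((-1/(j:ℝ)) - (-1/((j:ℝ)-1))) = -1/(n:ℝ) - (-1/(N:ℝ)) := by
          have := tele0 (fun j => -1/(j:ℝ)) N n hn
          rw [← this]
          apply Finset.sum_congr rfl
          intro j hj
          have hj1 : 1 ≤ j := by simp at hj; omega
          congr 2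
          push_cast [Nat.cast_sub hj1]
          ring
        have hnpos : (0:ℝ) < (n:ℝ) := by exact_mod_cast hn1
        have h6 : (0:ℝ) < (N:ℝ) := by exact_mod_cast hN1
        have h7 : (0:ℝ) ≤ 1/(n:ℝ) := by positivity
        have h3 : -1/(n:ℝ) - (-1/(N:ℝ)) ≤ 1/(N:ℝ) := by
          have : -1/(n:ℝ) - (-1/(N:ℝ)) = 1/(N:ℝ) - 1/(n:ℝ) := by ring
          linarith [this]
        linarith
      rw [hsplit] at hsum1
      have hh1 := mul_le_mul_of_nonneg_left hharm hμpos.le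
      have hh2 := mul_le_mul_of_nonneg_left hsq (show (0:ℝ) ≤ 2*μ^2 by positivity)
      linarith
    -- E = m/(ξ+δ)
    obtain ⟨E, hE⟩ : ∃ E : ℝ, E = m / (ξ + δ) := ⟨_, rfl⟩
    have hEpos : 0 < E := by rw [hE]; positivity
    have hA' : A = E - (V + δ) := by rw [hAdef, hE]
    -- summed bound for -m log P
    have hlogPm : ∀ n, N ≤ n →
        -(m * Real.log (P N)) + E * (Real.log ((n:ℝ)+1) - Real.log ((N:ℝ)+1))
          ≤ -(m * Real.log (P n)) := by
      intro n hn
      have htel := tele0 (fun j => -(m * Real.log (P j))) N n hn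
      have hsum1 : ∑ j ∈ Icc (N+1) n, E * (Real.log ((j:ℝ)+1) - Real.log (j:ℝ))
          ≤ ∑ j ∈ Icc (N+1) n, ((-(m * Real.log (P j))) - (-(m * Real.log (P (j-1))))) := by
        apply Finset.sum_le_sum
        intro j hj
        have hjN : N + 1 ≤ j := by simp at hj; omega
        have h0 := hlogP_inc j hjN
        have h1 := mul_le_mul_of_nonneg_left h0 hm.le
        calc E * (Real.log ((j:ℝ)+1) - Real.log (j:ℝ))
            = m * ((1/(ξ+δ)) * (Real.log ((j:ℝ)+1) - Real.log (j:ℝ))) := by rw [hE]; ring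
          _ ≤ m * ((- Real.log (P j)) - (- Real.log (P (j-1)))) := h1
          _ = (-(m * Real.log (P j))) - (-(m * Real.log (P (j-1)))) := by ring
      rw [htel] at hsum1
      have h2 : ∑ j ∈ Icc (N+1) n, E * (Real.log ((j:ℝ)+1) - Real.log (j:ℝ))
          = E * (Real.log ((n:ℝ)+1) - Real.log ((N:ℝ)+1)) := by
        rw [← Finset.mul_sum]
        congr 1
        have htel2 := tele0 (fun j => Real.log ((j:ℝ)+1)) N n hn
        rw [← htel2]
        apply Finset.sum_congr rfl
        intro j hj
        have hj1 : 1 ≤ j := by simp at hj; omega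
        have hcast : ((j-1 : ℕ):ℝ) + 1 = (j:ℝ) := by
          push_cast [Nat.cast_sub hj1]; ring
        show Real.log ((j:ℝ)+1) - Real.log (j:ℝ)
            = Real.log ((j:ℝ)+1) - Real.log (((j-1:ℕ):ℝ)+1)
        rw [hcast]
      rw [h2] at hsum1
      beta_reduce at hsum1
      linarith
    -- assemble lower bound for log b
    obtain ⟨C, hCdef⟩ : ∃ C : ℝ, C = -(m * Real.log (P N)) - E * Real.log ((N:ℝ)+1)
        - Real.log (v N) - 2*μ^2 * (1/(N:ℝ)) := ⟨_, rfl⟩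
    have hlogb : ∀ n, N ≤ n → 1 ≤ n → A * Real.log (n:ℝ) + C ≤ Real.log (b n) := by
      intro n hn hn1
      have hbn : Real.log (b n) = -(m * Real.log (P n)) - Real.log (v n) := by
        show Real.log (P n ^ (-m) / v n) = _
        rw [Real.log_div (Real.rpow_pos_of_pos (hP n) _).ne' (hv n).ne',
          Real.log_rpow (hP n)]
        ring
      have hnpos : (0:ℝ) < (n:ℝ) := by exact_mod_cast hn1
      have h1 := hlogv n hn hn1
      have h2 := hlogPm n hn
      have hlogn0 : 0 ≤ Real.log (n:ℝ) := Real.log_natCast_nonneg n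
      have hlogn1 : Real.log (n:ℝ) ≤ Real.log ((n:ℝ)+1) :=
        Real.log_le_log hnpos (by linarith)
      have hEL : E * (Real.log ((n:ℝ)+1) - Real.log ((N:ℝ)+1))
          = E * Real.log ((n:ℝ)+1) - E * Real.log ((N:ℝ)+1) := by ring
      have hEL2 : E * Real.log (n:ℝ) ≤ E * Real.log ((n:ℝ)+1) :=
        mul_le_mul_of_nonneg_left hlogn1 hEpos.le
      have hML : μ * Real.log (n:ℝ) ≤ (V + δ) * Real.log (n:ℝ) := by
        apply mul_le_mul_of_nonneg_right _ hlogn0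
        rw [hμdef]; linarith
      have hAL : A * Real.log (n:ℝ)
          = E * Real.log (n:ℝ) - (V + δ) * Real.log (n:ℝ) := by rw [hA']; ring
      rw [hbn, hCdef]
      linarith
    -- conclude
    have hlogtop : Tendsto (fun n : ℕ => A * Real.log (n:ℝ) + C) atTop atTop := by
      apply tendsto_atTop_add_const_right
      have := (Real.tendsto_log_atTop.comp (tendsto_natCast_atTop_atTop (R := ℝ))).const_mul_atTop hA
      exact this
    have hlb : Tendsto (fun n => Real.log (b n)) atTop atTop := by
      apply tendsto_atTop_mono' atTop _ hlogtop
      filter_upwards [eventually_ge_atTop N, eventually_ge_atTop 1] with n h1 h2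
      exact hlogb n h1 h2
    have hfin : Tendsto (fun n => Real.exp (Real.log (b n))) atTop atTop :=
      Real.tendsto_exp_atTop.comp hlb
    exact hfin.congr fun n => Real.exp_log (hbpos n)
  -- S tends to infinity
  have hS_top : Tendsto S atTop atTop := by
    obtain ⟨N, hN⟩ := (h_t.eventually_le_const (show c < c + 1 by linarith)).exists_forall_of_atTop
    have hc1 : (0:ℝ) < c + 1 := by linarith
    have key : ∀ n, N + 1 ≤ n → S (N+1) + (b n - b (N+1)) / (c+1) ≤ S n := by
      intro n hn
      have h1 : S n - S (N+1) = ∑ j ∈ Icc (N+1+1) n, (S j - S (j-1)) := (tele0 S (N+1) n hn).symm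
      have h2 : (b n - b (N+1)) / (c+1) = ∑ j ∈ Icc (N+1+1) n, (b j / (c+1) - b (j-1) / (c+1)) := by
        rw [tele0 (fun j => b j / (c+1)) (N+1) n hn]; ring
      have h3 : ∀ j ∈ Icc (N+1+1) n, b j / (c+1) - b (j-1) / (c+1) ≤ S j - S (j-1) := by
        intro j hj
        have hj1 : 1 ≤ j := by simp at hj; omega
        have hjN : N ≤ j := by simp at hj; omega
        have hSd : S j - S (j-1) = d j := by rw [hSrec j hj1]; ring
        rw [hSd, div_sub_div_same, div_le_iff₀ hc1, h_delta j hj1]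
        have := mul_le_mul_of_nonneg_right (hN j hjN) (hdpos j).le
        linarith [this]
      have := Finset.sum_le_sum h3
      rw [← h1, ← h2] at this
      linarith
    apply tendsto_atTop_mono' atTop
      (Filter.eventually_atTop.mpr ⟨N+1, key⟩)
    apply tendsto_atTop_add_const_left atTop (S (N+1))
    apply Filter.Tendsto.atTop_div_const hc1
    have := tendsto_atTop_add_const_right atTop (-(b (N+1))) hb_top
    simpa [sub_eq_add_neg] using this
  -- Stolz–Cesàro conclusion
  obtain ⟨f, hfdef⟩ : ∃ f : ℕ → ℝ,
      f = fun k => if k = 0 then 0 else b k - b (k-1) - c * d k := ⟨_, rfl⟩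
  obtain ⟨g, hgdef⟩ : ∃ g : ℕ → ℝ, g = fun k => if k = 0 then 0 else d k := ⟨_, rfl⟩
  have hg0 : 0 ≤ g := by
    intro k
    rw [hgdef]
    dsimp only
    split
    · exact le_rfl
    · exact (hdpos k).le
  have hRS : ∀ n, ∑ i ∈ range (n+1), g i = S n := by
    intro n
    induction n with
    | zero => simp [hgdef, hSdef]
    | succ n ih =>
      rw [Finset.sum_range_succ, ih, hSrec (n+1) (by omega)]
      simp [hgdef]
  have hFS : ∀ n, ∑ i ∈ range (n+1), f i = b n - b 0 - c * S n := by
    intro n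
    induction n with
    | zero => simp [hfdef, hSdef]
    | succ n ih =>
      rw [Finset.sum_range_succ, ih, hSrec (n+1) (by omega)]
      have h1 : f (n+1) = b (n+1) - b n - c * d (n+1) := by
        rw [hfdef]
        simp only [Nat.succ_ne_zero, if_false, Nat.add_sub_cancel]
      rw [h1]
      have h2 : (n+1) - 1 = n := rfl
      rw [h2]
      ring
  have hfg : f =o[atTop] g := by
    rw [Asymptotics.isLittleO_iff]
    intro ε hε
    have habs : Tendsto (fun k => |t k - c|) atTop (nhds 0) := by
      have := (h_t.sub_const c).abs
      simpa using this
    filter_upwards [habs.eventually_le_const hε, eventually_ge_atTop 1] with k hk hk1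
    have hk0 : ¬ k = 0 := by omega
    rw [hfdef, hgdef]
    dsimp only
    rw [if_neg hk0, if_neg hk0]
    have h1 : b k - b (k-1) - c * d k = (t k - c) * d k := by
      rw [h_delta k hk1]; ring
    rw [h1, Real.norm_eq_abs, Real.norm_eq_abs, abs_mul,
      abs_of_pos (hdpos k)]
    exact mul_le_mul_of_nonneg_right hk (hdpos k).le
  have hgsum : Tendsto (fun n => ∑ i ∈ range n, g i) atTop atTop := by
    rw [← tendsto_add_atTop_iff_nat 1]
    exact hS_top.congr fun n => (hRS n).symm
  have holittle := hfg.sum_range hg0 hgsum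
  have ho2 : (fun n => b n - b 0 - c * S n) =o[atTop] S := by
    have h3 := holittle.comp_tendsto (tendsto_add_atTop_nat 1)
    refine h3.congr' (Eventually.of_forall fun n => ?_) (Eventually.of_forall fun n => ?_)
    · show (∑ i ∈ range (n+1), f i) = _
      rw [hFS]
    · show (∑ i ∈ range (n+1), g i) = _
      rw [hRS]
  have hSne : ∀ᶠ n : ℕ in atTop, S n ≠ 0 := by
    filter_upwards [eventually_ge_atTop 1] with n hn
    exact (hSpos n hn).ne'
  have htend0 : Tendsto (fun n => (b n - b 0 - c * S n) / S n) atTop (nhds 0) := by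
    apply (Asymptotics.isLittleO_iff_tendsto' ?_).mp ho2
    filter_upwards [hSne] with n hn h
    exact absurd h hn
  have hb0S : Tendsto (fun n => b 0 / S n) atTop (nhds 0) :=
    tendsto_const_nhds.div_atTop hS_top
  have hbS : Tendsto (fun n => b n / S n) atTop (nhds c) := by
    have hsum := (htend0.add hb0S).add_const c
    rw [add_zero, zero_add] at hsum
    apply hsum.congr'
    filter_upwards [hSne] with n hn
    field_simp
    ring
  have h9 : Tendsto (fun n => (b n / S n)⁻¹) atTop (nhds c⁻¹) := hbS.inv₀ hmξ.ne'
  have hgoal : Tendsto (fun n => v n * P n ^ m * S n) atTop (nhds (1/c)) := by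
    rw [one_div]
    apply h9.congr
    intro n
    rw [inv_div]
    show S n / (P n ^ (-m) / v n) = v n * P n ^ m * S n
    rw [Real.rpow_neg (hP n).le]
    have h5 := (Real.rpow_pos_of_pos (hP n) m).ne'
    have h6 := (hv n).ne'
    field_simp
  exact hgoal
end

section
/- Under the hypotheses of the previous lemma (v_n ∈ GS(v*), γ_n ∈ GS(-α) with γ_n → 0, ξ = lim 1/(nγ_n), m - v*ξ > 0), for any positive sequence (α_n) with lim α_n = 0 and any δ ∈ ℝ, one has lim_{n→∞} v_n Π_n^m [ ∑_{k=1}^n Π_k^{-m} (γ_k/v_k) α_k + δ ] = 0. -/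
open Filter Finset

noncomputable def auxh (t : ℝ) : ℝ := if t = 0 then -1 else Real.log (1 - t) / t

lemma auxh_tendsto : Tendsto auxh (nhds 0) (nhds (-1)) := by
  have hd : HasDerivAt (fun x : ℝ => Real.log (1 - x)) (-1) 0 := by
    have h1 : HasDerivAt (fun x : ℝ => 1 - x) (-1) 0 := by
      simpa using (hasDerivAt_id (0:ℝ)).const_sub 1
    have h2 : HasDerivAt Real.log 1 ((fun x : ℝ => 1 - x) 0) := by
      simpa using Real.hasDerivAt_log (by norm_num : (1:ℝ) - 0 ≠ 0)
    have h3 := h2.comp 0 h1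
    rw [one_mul] at h3
    exact h3
  have hs := hasDerivAt_iff_tendsto_slope.mp hd
  have hcong : Tendsto auxh (nhdsWithin 0 {(0:ℝ)}ᶜ) (nhds (-1)) := by
    refine Tendsto.congr' ?_ hs
    filter_upwards [self_mem_nhdsWithin] with t ht
    have ht' : t ≠ 0 := ht
    simp [slope_def_field, auxh, ht']
  have : Tendsto auxh (nhdsWithin 0 {(0:ℝ)}ᶜ ⊔ pure 0) (nhds (-1)) := by
    refine tendsto_sup.mpr ⟨hcong, ?_⟩
    have : auxh 0 = -1 := by simp [auxh]
    simpa [this] using (tendsto_pure_nhds auxh 0)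
  rwa [nhdsNE_sup_pure] at this

lemma log_eq_auxh (t : ℝ) : Real.log (1 - t) = t * auxh t := by
  by_cases h : t = 0
  · simp [auxh, h]
  · simp only [auxh, if_neg h]
    rw [mul_div_assoc']
    exact (mul_div_cancel_left₀ _ h).symm

theorem stmt1 (v γ : ℕ → ℝ) (vstar α ξ m : ℝ)
    (hv : ∀ n, 0 < v n)
    (hγ : ∀ n, γ n ∈ Set.Ioo (0:ℝ) 1)
    (hvGS : Tendsto (fun n : ℕ => (n : ℝ) * (1 - v (n-1) / v n)) atTop (nhds vstar))
    (hγGS : Tendsto (fun n : ℕ => (n : ℝ) * (1 - γ (n-1) / γ n)) atTop (nhds (-α)))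
    (hγ0 : Tendsto γ atTop (nhds 0))
    (hξ : Tendsto (fun n : ℕ => 1 / ((n : ℝ) * γ n)) atTop (nhds ξ))
    (hm : 0 < m) (hmξ : 0 < m - vstar * ξ)
    (αseq : ℕ → ℝ) (hα : ∀ n, 0 < αseq n)
    (hα0 : Tendsto αseq atTop (nhds 0)) (δ : ℝ) :
    Tendsto (fun n : ℕ =>
      v n * (∏ j ∈ Icc 1 n, (1 - γ j)) ^ m *
        ((∑ k ∈ Icc 1 n, ((∏ j ∈ Icc 1 k, (1 - γ j)) ^ (-m)) * (γ k / v k) * αseq k) + δ))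
      atTop (nhds 0) := by
  have hγpos : ∀ n, 0 < γ n := fun n => (hγ n).1
  have hγlt : ∀ n, γ n < 1 := fun n => (hγ n).2
  have hγne : ∀ n, γ n ≠ 0 := fun n => (hγpos n).ne'
  set P : ℕ → ℝ := fun n => ∏ j ∈ Icc 1 n, (1 - γ j) with hPdef
  have hPpos : ∀ n, 0 < P n := fun n =>
    Finset.prod_pos (fun j _ => by linarith [hγlt j])
  set w : ℕ → ℝ := fun n => v n * P n ^ m with hwdef
  have hwpos : ∀ n, 0 < w n := fun n =>
    mul_pos (hv n) (Real.rpow_pos_of_pos (hPpos n) m)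
  set L : ℕ → ℝ := fun n => Real.log (v n / v (n-1)) + m * Real.log (1 - γ n) with hLdef
  -- L n / γ n → vstar * ξ - m
  have hLlim : Tendsto (fun n : ℕ => L n / γ n) atTop (nhds (vstar * ξ - m)) := by
    have ha : Tendsto (fun n : ℕ => Real.log (1 - γ n) / γ n) atTop (nhds (-1)) := by
      have := auxh_tendsto.comp hγ0
      refine this.congr fun n => ?_
      simp [Function.comp, auxh, hγne n]
    have ht0 : Tendsto (fun n : ℕ => 1 - v (n-1) / v n) atTop (nhds 0) := by
      have h1 : Tendsto (fun n : ℕ => ((n:ℝ) * (1 - v (n-1) / v n)) * (1/(n:ℝ)))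
          atTop (nhds (vstar * 0)) := hvGS.mul tendsto_one_div_atTop_nhds_zero_nat
      rw [mul_zero] at h1
      refine h1.congr' ?_
      filter_upwards [eventually_ge_atTop 1] with n hn
      have : (n:ℝ) ≠ 0 := Nat.cast_ne_zero.mpr (by omega)
      field_simp
    have hb0 : Tendsto (fun n : ℕ => (n:ℝ) * Real.log (v n / v (n-1))) atTop (nhds vstar) := by
      have hcomp : Tendsto (fun n : ℕ => auxh (1 - v (n-1) / v n)) atTop (nhds (-1)) :=
        auxh_tendsto.comp ht0
      have h2 : Tendsto (fun n : ℕ =>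
          ((n:ℝ) * (1 - v (n-1) / v n)) * auxh (1 - v (n-1) / v n)) atTop
          (nhds (vstar * (-1))) := hvGS.mul hcomp
      have h3 : Tendsto (fun n : ℕ =>
          -( ((n:ℝ) * (1 - v (n-1) / v n)) * auxh (1 - v (n-1) / v n)))
          atTop (nhds vstar) := by simpa using h2.neg
      refine h3.congr fun n => ?_
      have hlog : Real.log (v (n-1) / v n)
          = (1 - v (n-1) / v n) * auxh (1 - v (n-1) / v n) := by
        have := log_eq_auxh (1 - v (n-1) / v n)
        simpa using this
      have hlog2 : Real.log (v n / v (n-1)) = - Real.log (v (n-1) / v n) := by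
        rw [← Real.log_inv]
        congr 1
        field_simp
      rw [hlog2, hlog]; ring
    have hb : Tendsto (fun n : ℕ => Real.log (v n / v (n-1)) / γ n) atTop
        (nhds (vstar * ξ)) := by
      have h1 : Tendsto (fun n : ℕ =>
          ((n:ℝ) * Real.log (v n / v (n-1))) * (1 / ((n:ℝ) * γ n)))
          atTop (nhds (vstar * ξ)) := hb0.mul hξ
      refine h1.congr' ?_
      filter_upwards [eventually_ge_atTop 1] with n hn
      have hne : (n:ℝ) ≠ 0 := Nat.cast_ne_zero.mpr (by omega)
      rw [mul_one_div, mul_div_mul_left _ _ hne]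
    have hsum := hb.add (ha.const_mul m)
    have heq : vstar * ξ + m * (-1) = vstar * ξ - m := by ring
    rw [heq] at hsum
    refine hsum.congr fun n => ?_
    simp only [hLdef]
    field_simp
  -- the constant c
  set c : ℝ := (m - vstar * ξ) / 2 with hcdef
  have hc : 0 < c := by simp [hcdef]; linarith
  -- eventually L n ≤ -(c * γ n)
  have hLev : ∀ᶠ n in atTop, L n ≤ -(c * γ n) := by
    have : ∀ᶠ n in atTop, L n / γ n < -c := by
      refine hLlim.eventually (eventually_lt_nhds ?_)
      simp [hcdef]; linarith
    filter_upwards [this] with n hn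
    have := (div_lt_iff₀ (hγpos n)).mp hn
    nlinarith [hγpos n]
  obtain ⟨N, hN⟩ := eventually_atTop.mp hLev
  -- ratio identity
  have hratio : ∀ k : ℕ, w (k+1) = w k * Real.exp (L (k+1)) := by
    intro k
    have hx : (0:ℝ) < 1 - γ (k+1) := by linarith [hγlt (k+1)]
    have hP1 : P (k+1) = P k * (1 - γ (k+1)) := by
      simp [hPdef, Finset.prod_Icc_succ_top (by omega : 1 ≤ k+1)]
    have e1 : Real.exp (L (k+1)) = (v (k+1) / v k) * (1 - γ (k+1)) ^ m := by
      simp only [hLdef, Nat.add_sub_cancel]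
      rw [Real.exp_add, Real.exp_log (div_pos (hv (k+1)) (hv k))]
      congr 1
      rw [Real.rpow_def_of_pos hx, mul_comm]
    simp only [hwdef, hP1, e1, Real.mul_rpow (hPpos k).le hx.le]
    field_simp
    rw [eq_div_iff (hv k).ne']
  -- the partial sums of γ
  set s : ℕ → ℝ := fun n => ∑ j ∈ Icc 1 n, γ j with hsdef
  have hssucc : ∀ k : ℕ, s (k+1) = s k + γ (k+1) := by
    intro k
    simp [hsdef, Finset.sum_Icc_succ_top (by omega : 1 ≤ k+1)]
  -- exponential decay
  have hB : ∀ k n, N ≤ k → k ≤ n → w n ≤ w k * Real.exp (-(c * (s n - s k))) := by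
    intro k n hk hkn
    induction n, hkn using Nat.le_induction with
    | base => simp
    | succ n hkn ih =>
      have hLn : L (n+1) ≤ -(c * γ (n+1)) := hN (n+1) (by omega)
      calc w (n+1) = w n * Real.exp (L (n+1)) := hratio n
        _ ≤ w n * Real.exp (-(c * γ (n+1))) :=
            mul_le_mul_of_nonneg_left (Real.exp_le_exp.mpr hLn) (hwpos n).le
        _ ≤ (w k * Real.exp (-(c * (s n - s k)))) * Real.exp (-(c * γ (n+1))) :=
            mul_le_mul_of_nonneg_right ih (Real.exp_pos _).le
        _ = w k * (Real.exp (-(c * (s n - s k))) * Real.exp (-(c * γ (n+1)))) :=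
            mul_assoc _ _ _
        _ = w k * Real.exp (-(c * (s (n+1) - s k))) := by
            rw [← Real.exp_add]
            congr 1
            rw [hssucc n]
            ring
  -- s → ∞
  have hIccIoc : ∀ t : ℕ, Icc 1 t = Ioc 0 t := fun t => by
    rw [← Finset.Icc_add_one_left_eq_Ioc]
    rfl
  have hsinf : Tendsto s atTop atTop := by
    have hξ0 : 0 ≤ ξ := by
      refine ge_of_tendsto' hξ fun n => ?_
      exact one_div_nonneg.mpr (mul_nonneg (Nat.cast_nonneg n) (hγpos n).le)
    have hxpos : (0:ℝ) < ξ + 1 := by linarith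
    have hev : ∀ᶠ n : ℕ in atTop, 1 / ((n:ℝ) * γ n) ≤ ξ + 1 :=
      hξ.eventually (eventually_le_nhds (by linarith))
    obtain ⟨M0, hM0⟩ := eventually_atTop.mp hev
    set M : ℕ := max M0 1 with hMdef
    have hpt : ∀ n : ℕ, M ≤ n → (1/(ξ+1)) * (1/(n:ℝ)) ≤ γ n := by
      intro n hn
      have hn1 : 1 ≤ n := le_trans (le_max_right _ _) hn
      have hnpos : (0:ℝ) < (n:ℝ) := Nat.cast_pos.mpr (by omega)
      have h := hM0 n (le_trans (le_max_left _ _) hn)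
      have hngpos : 0 < (n:ℝ) * γ n := mul_pos hnpos (hγpos n)
      rw [div_le_iff₀ hngpos] at h
      have heq : (1/(ξ+1)) * (1/(n:ℝ)) = 1/((ξ+1)*(n:ℝ)) := one_div_mul_one_div _ _
      rw [heq, div_le_iff₀ (by positivity)]
      nlinarith
    set H : ℕ → ℝ := fun n => ∑ k ∈ Icc 1 n, (1/(k:ℝ)) with hHdef
    have hH : Tendsto H atTop atTop := by
      refine Real.tendsto_sum_range_one_div_nat_succ_atTop.congr fun n => ?_
      show _ = ∑ k ∈ Icc 1 n, (1/(k:ℝ))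
      rw [← Finset.Ico_add_one_right_eq_Icc, Finset.sum_Ico_eq_sum_range]
      refine Finset.sum_congr (by norm_num) fun i _ => ?_
      push_cast
      rw [add_comm]
    set b : ℝ := 1/(ξ+1) with hbdef
    have hbpos : 0 < b := by positivity
    have hmain : Tendsto (fun n => (s M - b * H M) + b * H n) atTop atTop :=
      tendsto_atTop_add_const_left _ _ (hH.const_mul_atTop hbpos)
    refine tendsto_atTop_mono' atTop ?_ hmain
    filter_upwards [eventually_ge_atTop M] with n hn
    have hsplit1 : s M + ∑ k ∈ Ioc M n, γ k = s n := by
      simp only [hsdef, hIccIoc]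
      exact Finset.sum_Ioc_consecutive _ (Nat.zero_le M) hn
    have hsplit2 : H M + ∑ k ∈ Ioc M n, (1/(k:ℝ)) = H n := by
      simp only [hHdef, hIccIoc]
      exact Finset.sum_Ioc_consecutive _ (Nat.zero_le M) hn
    have hsum_le : ∑ k ∈ Ioc M n, b * (1/(k:ℝ)) ≤ ∑ k ∈ Ioc M n, γ k := by
      refine Finset.sum_le_sum fun k hk => ?_
      exact hpt k (Finset.mem_Ioc.mp hk).1.le
    rw [← Finset.mul_sum] at hsum_le
    nlinarith [hsum_le]
  -- w → 0
  have hw0 : Tendsto w atTop (nhds 0) := by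
    have hub : ∀ᶠ n in atTop, w n ≤ (w N * Real.exp (c * s N)) * Real.exp (-(c * s n)) := by
      filter_upwards [eventually_ge_atTop N] with n hn
      calc w n ≤ w N * Real.exp (-(c * (s n - s N))) := hB N n le_rfl hn
        _ = w N * (Real.exp (c * s N) * Real.exp (-(c * s n))) := by
            rw [← Real.exp_add]
            congr 1
            ring
        _ = w N * Real.exp (c * s N) * Real.exp (-(c * s n)) := (mul_assoc _ _ _).symm
    have hlb : ∀ᶠ n in atTop, 0 ≤ w n := Eventually.of_forall fun n => (hwpos n).le
    have hrhs : Tendsto (fun n => (w N * Real.exp (c * s N)) * Real.exp (-(c * s n)))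
        atTop (nhds 0) := by
      have h1 : Tendsto (fun n => -(c * s n)) atTop atBot := by
        refine Filter.tendsto_neg_atBot_iff.mpr ?_
        exact (hsinf.const_mul_atTop hc)
      have := Real.tendsto_exp_atBot.comp h1
      simpa using (this.const_mul (w N * Real.exp (c * s N)))
    exact tendsto_of_tendsto_of_tendsto_of_le_of_le' tendsto_const_nhds hrhs hlb hub
  -- key telescoping bound
  have hT : ∀ n, ∑ k ∈ Icc 1 n, Real.exp (c * s k) * γ k
      ≤ (Real.exp c / c) * Real.exp (c * s n) := by
    intro n
    induction n with
    | zero => simp; positivity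
    | succ n ih =>
      rw [Finset.sum_Icc_succ_top (by omega : 1 ≤ n+1)]
      have key : Real.exp (c * s (n+1)) * γ (n+1)
          ≤ (Real.exp c / c) * (Real.exp (c * s (n+1)) - Real.exp (c * s n)) := by
        have hγ1 : γ (n+1) ≤ 1 := (hγlt _).le
        have h1 : c * γ (n+1) + 1 ≤ Real.exp (c * γ (n+1)) := Real.add_one_le_exp _
        have e1 : Real.exp (c * s (n+1)) = Real.exp (c * s n) * Real.exp (c * γ (n+1)) := by
          rw [hssucc n, mul_add, Real.exp_add]
        rw [e1]
        have hec : Real.exp (c * γ (n+1)) ≤ Real.exp c :=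
          Real.exp_le_exp.mpr (by nlinarith)
        have hpos1 := Real.exp_pos (c * s n)
        have hpos2 := Real.exp_pos (c * γ (n+1))
        rw [show Real.exp c / c * (Real.exp (c * s n) * Real.exp (c * γ (n+1))
              - Real.exp (c * s n))
            = (Real.exp c * (Real.exp (c * s n) * Real.exp (c * γ (n+1))
              - Real.exp (c * s n))) / c from by ring, le_div_iff₀ hc]
        have t1 : c * γ (n+1) ≤ Real.exp (c * γ (n+1)) - 1 := by linarith
        nlinarith [mul_pos hc (hγpos (n+1)),
          mul_le_mul_of_nonneg_left t1 (Real.exp_pos c).le,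
          mul_le_mul_of_nonneg_right hec (mul_nonneg hc.le (hγpos (n+1)).le)]
      linarith
  -- final assembly
  have hU : Tendsto (fun n => ∑ k ∈ Icc 1 n, w n * (γ k * αseq k / w k)) atTop (nhds 0) := by
    rw [Metric.tendsto_atTop]
    intro ε hε
    set ε' := c * ε / (2 * Real.exp c) with hε'def
    have hecpos := Real.exp_pos c
    have hε'pos : 0 < ε' := by positivity
    obtain ⟨K0, hK0⟩ := Metric.tendsto_atTop.mp hα0 ε' hε'pos
    set K : ℕ := max N K0 with hKdef
    set C : ℝ := ∑ k ∈ Icc 1 K, (γ k * αseq k / w k) with hCdef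
    have hwC : ∀ᶠ n in atTop, w n * C < ε / 2 := by
      have h1 : Tendsto (fun n => w n * C) atTop (nhds 0) := by
        simpa using hw0.mul_const C
      exact h1.eventually (eventually_lt_nhds (by positivity : (0:ℝ) < ε/2))
    obtain ⟨N2, hN2⟩ := eventually_atTop.mp hwC
    refine ⟨max K N2, fun n hn => ?_⟩
    have hnK : K ≤ n := le_trans (le_max_left _ _) hn
    have hnN2 : N2 ≤ n := le_trans (le_max_right _ _) hn
    have hsplit : ∑ k ∈ Icc 1 n, w n * (γ k * αseq k / w k)
        = ∑ k ∈ Icc 1 K, w n * (γ k * αseq k / w k)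
          + ∑ k ∈ Ioc K n, w n * (γ k * αseq k / w k) := by
      simp only [hIccIoc]
      exact (Finset.sum_Ioc_consecutive _ (Nat.zero_le K) hnK).symm
    have htail : ∑ k ∈ Ioc K n, w n * (γ k * αseq k / w k) ≤ ε / 2 := by
      have step1 : ∀ k ∈ Ioc K n, w n * (γ k * αseq k / w k)
          ≤ ε' * (Real.exp (-(c * s n)) * (Real.exp (c * s k) * γ k)) := by
        intro k hk
        obtain ⟨hk1, hk2⟩ := Finset.mem_Ioc.mp hk
        have hkN : N ≤ k := le_trans (le_max_left N K0) hk1.le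
        have hwb := hB k n hkN hk2
        have hαk : αseq k ≤ ε' := by
          have := hK0 k (le_trans (le_max_right N K0) hk1.le)
          rw [Real.dist_eq, abs_of_nonneg (by linarith [hα k])] at this
          linarith
        have hwk := hwpos k
        have hdiv : w n / w k ≤ Real.exp (-(c * (s n - s k))) := by
          rw [div_le_iff₀ hwk]
          linarith [hwb]
        have heq1 : w n * (γ k * αseq k / w k) = (w n / w k) * (γ k * αseq k) := by
          field_simp
        have heq2 : Real.exp (-(c * (s n - s k)))
            = Real.exp (-(c * s n)) * Real.exp (c * s k) := by
          rw [← Real.exp_add]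
          congr 1
          ring
        rw [heq1]
        calc (w n / w k) * (γ k * αseq k)
            ≤ Real.exp (-(c * (s n - s k))) * (γ k * αseq k) := by
              refine mul_le_mul_of_nonneg_right hdiv ?_
              exact mul_nonneg (hγpos k).le (hα k).le
          _ ≤ Real.exp (-(c * (s n - s k))) * (γ k * ε') := by
              refine mul_le_mul_of_nonneg_left ?_ (Real.exp_pos _).le
              exact mul_le_mul_of_nonneg_left hαk (hγpos k).le
          _ = ε' * (Real.exp (-(c * s n)) * (Real.exp (c * s k) * γ k)) := by
              rw [heq2]
              ring
      calc ∑ k ∈ Ioc K n, w n * (γ k * αseq k / w k)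
          ≤ ∑ k ∈ Ioc K n, ε' * (Real.exp (-(c * s n)) * (Real.exp (c * s k) * γ k)) :=
            Finset.sum_le_sum step1
        _ = ε' * Real.exp (-(c * s n)) * ∑ k ∈ Ioc K n, Real.exp (c * s k) * γ k := by
            rw [Finset.mul_sum (Ioc K n) (fun k => Real.exp (c * s k) * γ k)
              (ε' * Real.exp (-(c * s n)))]
            refine Finset.sum_congr rfl fun k _ => ?_
            ring
        _ ≤ ε' * Real.exp (-(c * s n)) * ∑ k ∈ Icc 1 n, Real.exp (c * s k) * γ k := by
            refine mul_le_mul_of_nonneg_left ?_ (by positivity)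
            refine Finset.sum_le_sum_of_subset_of_nonneg ?_ ?_
            · rw [hIccIoc]
              exact Finset.Ioc_subset_Ioc_left (Nat.zero_le K)
            · intro k _ _
              exact mul_nonneg (Real.exp_pos _).le (hγpos k).le
        _ ≤ ε' * Real.exp (-(c * s n)) * ((Real.exp c / c) * Real.exp (c * s n)) := by
            refine mul_le_mul_of_nonneg_left (hT n) (by positivity)
        _ = ε' * (Real.exp c / c) := by
            rw [Real.exp_neg]
            field_simp
        _ = ε / 2 := by
            rw [hε'def]
            field_simp
    have hhead : ∑ k ∈ Icc 1 K, w n * (γ k * αseq k / w k) = w n * C := by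
      rw [hCdef, Finset.mul_sum (Icc 1 K) (fun k => γ k * αseq k / w k) (w n)]
    have hnonneg : 0 ≤ ∑ k ∈ Icc 1 n, w n * (γ k * αseq k / w k) := by
      refine Finset.sum_nonneg fun k _ => ?_
      have := hwpos k
      have := hwpos n
      have := hγpos k
      have := hα k
      positivity
    rw [Real.dist_eq, sub_zero, abs_of_nonneg hnonneg, hsplit, hhead]
    linarith [hN2 n hnN2, htail]
  have htot : Tendsto (fun n => (∑ k ∈ Icc 1 n, w n * (γ k * αseq k / w k)) + w n * δ)
      atTop (nhds 0) := by
    simpa using hU.add (hw0.mul_const δ)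
  refine htot.congr fun n => ?_
  show (∑ k ∈ Icc 1 n, w n * (γ k * αseq k / w k)) + w n * δ
      = v n * P n ^ m * ((∑ k ∈ Icc 1 n, (P k ^ (-m)) * (γ k / v k) * αseq k) + δ)
  have hterm : ∀ k, w n * (γ k * αseq k / w k)
      = v n * P n ^ m * ((P k ^ (-m)) * (γ k / v k) * αseq k) := by
    intro k
    have h1 : v k ≠ 0 := (hv k).ne'
    have h2 : P k ^ m ≠ 0 := (Real.rpow_pos_of_pos (hPpos k) m).ne'
    rw [Real.rpow_neg (hPpos k).le]
    show (v n * P n ^ m) * (γ k * αseq k / (v k * P k ^ m)) = _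
    rw [div_eq_mul_inv, mul_inv, div_eq_mul_inv]
    ring
  rw [mul_add, Finset.mul_sum (Icc 1 n)
    (fun k => (P k ^ (-m)) * (γ k / v k) * αseq k) (v n * P n ^ m)]
  congr 1
  exact Finset.sum_congr rfl fun k _ => hterm k
end
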